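/- Let λ ≥ 0 and let Z be a Poisson random variable with parameter λ. Then for every real p ≥ 1, the centered moments satisfy (E|Z − λ|^p)^{1/p} ≤ 5·(√(3λ) + 2)·p. Consequently the centered Poisson variable Z − λ is sub-exponential with sub-exponential norm at most C·(√(3λ) + 2) for a universal constant C > 0. -/

import Mathlib

open Complex MeasureTheory ProbabilityTheory Matrix ComplexConjugate
open scoped Kronecker

noncomputable section

/-- Zero-extension of a matrix to integer indices: out-of-range entries are `0`. -/
def zext {n1 n2 : ℕ} (X : Matrix (Fin n1) (Fin n2) ℂ) (t1 t2 : ℤ) : ℂ :=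
  if h : 0 ≤ t1 ∧ t1 < (n1 : ℤ) ∧ 0 ≤ t2 ∧ t2 < (n2 : ℤ) then
    X ⟨t1.toNat, by omega⟩ ⟨t2.toNat, by omega⟩
  else 0

/-- Cross-correlation `C_{[X1,X2]}(s1,s2)`, with out-of-range terms taken as `0`. -/
def crossCorr {n1 n2 : ℕ} (X1 X2 : Matrix (Fin n1) (Fin n2) ℂ) (s1 s2 : ℤ) : ℂ :=
  ∑ t1 : Fin n1, ∑ t2 : Fin n2,
    X1 t1 t2 * conj (zext X2 (((t1 : ℕ) : ℤ) - s1) (((t2 : ℕ) : ℤ) - s2))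

/-- Autocorrelation `A_X = C_{[X,X]}`. -/
def autocorr {n1 n2 : ℕ} (X : Matrix (Fin n1) (Fin n2) ℂ) : ℤ → ℤ → ℂ :=
  crossCorr X X

/-- Horizontal concatenation `[X, R]` of two `n × n` matrices. -/
def hcat {n : ℕ} (X R : Matrix (Fin n) (Fin n) ℂ) : Matrix (Fin n) (Fin (2 * n)) ℂ :=
  Matrix.of fun t1 t2 =>
    if h : (t2 : ℕ) < n then X t1 ⟨t2, h⟩ else R t1 ⟨(t2 : ℕ) - n, by omega⟩

/-- The size `m1 × m2` oversampled discrete Fourier transform of an `n1 × n2` signal. -/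
def dft2 {n1 n2 : ℕ} (m1 m2 : ℕ) (Z : Matrix (Fin n1) (Fin n2) ℂ) (k1 k2 : ℕ) : ℂ :=
  ∑ t1 : Fin n1, ∑ t2 : Fin n2,
    Z t1 t2 * Complex.exp (-(2 * (Real.pi : ℂ) * Complex.I) *
      (((t1 : ℕ) : ℂ) * (k1 : ℂ) / (m1 : ℂ) + ((t2 : ℕ) : ℂ) * (k2 : ℂ) / (m2 : ℂ)))

/-- Quadrant cross-correlation `C°_{[X,R]}(i,j) = C_{[X,R]}(i-(n-1), j-(n-1))`. -/
def quadCC {n : ℕ} (X R : Matrix (Fin n) (Fin n) ℂ) : Matrix (Fin n) (Fin n) ℂ :=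
  Matrix.of fun i j =>
    crossCorr X R (((i : ℕ) : ℤ) - ((n : ℤ) - 1)) (((j : ℕ) : ℤ) - ((n : ℤ) - 1))

/-- Columnwise vectorization: the pair `(j, i)` (column `j`, row `i`) indexes entry `X i j`. -/
def vecM {a b : ℕ} (X : Matrix (Fin a) (Fin b) ℂ) : Fin b × Fin a → ℂ :=
  fun p => X p.2 p.1

/-- The matrix `M_R` satisfying `vec (C°_{[X,R]}) = M_R • vec X` (columnwise vectorization). -/
def MR {n : ℕ} (R : Matrix (Fin n) (Fin n) ℂ) :
    Matrix (Fin n × Fin n) (Fin n × Fin n) ℂ :=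
  Matrix.of fun p q =>
    conj (zext R (((q.2 : ℕ) : ℤ) - ((p.2 : ℕ) : ℤ) + ((n : ℤ) - 1))
      (((q.1 : ℕ) : ℤ) - ((p.1 : ℕ) : ℤ) + ((n : ℤ) - 1)))

/-- `P1 · F_LA^*`: row `t ∈ {0,…,n-1}` corresponds to the column `t - (n-1)` of `F_LA`. -/
def P1FLA (n m : ℕ) : Matrix (Fin n) (Fin m) ℂ :=
  Matrix.of fun t k =>
    Complex.exp ((2 * (Real.pi : ℂ) * Complex.I) * ((k : ℕ) : ℂ) *
      (((t : ℕ) : ℂ) - ((n : ℂ) - 1)) / (m : ℂ))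

/-- `P2 · F_RA^*`: row `t ∈ {0,…,n-1}` corresponds to the column `t - (2n-1)` of `F_RA`. -/
def P2FRA (n m : ℕ) : Matrix (Fin n) (Fin m) ℂ :=
  Matrix.of fun t k =>
    Complex.exp ((2 * (Real.pi : ℂ) * Complex.I) * ((k : ℕ) : ℂ) *
      (((t : ℕ) : ℂ) - (2 * (n : ℂ) - 1)) / (m : ℂ))

/-- The referenced-deconvolution matrix
`T_R = (1/m²) · M_R⁻¹ · [(P2 F_RA^*) ⊗ (P1 F_LA^*)]`. -/
def TR {n : ℕ} (m : ℕ) (R : Matrix (Fin n) (Fin n) ℂ) :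
    Matrix (Fin n × Fin n) (Fin m × Fin m) ℂ :=
  ((m : ℂ) ^ 2)⁻¹ • ((MR R)⁻¹ * (P2FRA n m ⊗ₖ P1FLA n m))

/-- The reference scaling factor: `S_R(k1,k2)` is the squared ℓ²-norm of the column of `T_R`
indexed by the pair `(k1, k2)` (i.e. column `m·k1 + k2`). -/
def SR {n : ℕ} (m : ℕ) (R : Matrix (Fin n) (Fin n) ℂ) (k1 k2 : Fin m) : ℝ :=
  ∑ p : Fin n × Fin n, ‖TR m R p (k1, k2)‖ ^ 2

/-- Lower-triangular all-ones matrix `1_L`. -/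
def oneL (n : ℕ) : Matrix (Fin n) (Fin n) ℂ :=
  Matrix.of fun i j => if j ≤ i then 1 else 0

/-- First-order difference matrix `D_n` (the inverse of `1_L`). -/
def Dmat (n : ℕ) : Matrix (Fin n) (Fin n) ℂ :=
  Matrix.of fun i j => if i = j then 1 else if (j : ℕ) + 1 = (i : ℕ) then -1 else 0

/-- Pinhole reference. -/
def pinholeRef (n : ℕ) : Matrix (Fin n) (Fin n) ℂ :=
  Matrix.of fun t1 t2 => if (t1 : ℕ) = n - 1 ∧ (t2 : ℕ) = n - 1 then 1 else 0

/-- Slit reference. -/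
def slitRef (n : ℕ) : Matrix (Fin n) (Fin n) ℂ :=
  Matrix.of fun _ t2 => if (t2 : ℕ) = n - 1 then 1 else 0

/-- Block reference. -/
def blockRef (n : ℕ) : Matrix (Fin n) (Fin n) ℂ :=
  Matrix.of fun _ _ => 1

/-- Centered moment bound for a Poisson random variable:
`(E|Z - λ|^p)^{1/p} ≤ 5·(√(3λ) + 2)·p` for all real `p ≥ 1`; consequently `Z - λ` is
sub-exponential with sub-exponential norm at most `C·(√(3λ) + 2)` for a universal `C > 0`. -/

lemma pois_hasSum (lam u : ℝ) :
    HasSum (fun k : ℕ => Real.exp (-lam) * lam ^ k / (k.factorial : ℝ) *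
        Real.exp (u * ((k : ℝ) - lam)))
      (Real.exp (lam * (Real.exp u - 1 - u))) := by
  have h0 : HasSum (fun k : ℕ => (lam * Real.exp u) ^ k / (k.factorial : ℝ))
      (Real.exp (lam * Real.exp u)) := by
    have := NormedSpace.expSeries_div_hasSum_exp (lam * Real.exp u)
    rwa [← Real.exp_eq_exp_ℝ] at this
  have h1 := h0.mul_left (Real.exp (-lam) * Real.exp (-(u * lam)))
  have hterm : (fun k : ℕ => Real.exp (-lam) * lam ^ k / (k.factorial : ℝ) *
      Real.exp (u * ((k : ℝ) - lam))) =
      fun k : ℕ => Real.exp (-lam) * Real.exp (-(u * lam)) *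
        ((lam * Real.exp u) ^ k / (k.factorial : ℝ)) := by
    funext k
    rw [mul_pow, ← Real.exp_nat_mul,
      show u * ((k : ℝ) - lam) = (k : ℝ) * u + -(u * lam) by ring, Real.exp_add]
    ring
  have he : Real.exp (-lam) * Real.exp (-(u * lam)) * Real.exp (lam * Real.exp u) =
      Real.exp (lam * (Real.exp u - 1 - u)) := by
    rw [← Real.exp_add, ← Real.exp_add]
    ring_nf
  rw [hterm, ← he]
  exact h1

lemma rpow_le_exp_aux {p y : ℝ} (hp : 1 ≤ p) (hy : 0 ≤ y) :
    y ^ p ≤ (p / Real.exp 1) ^ p * Real.exp y := by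
  have hp0 : 0 < p := lt_of_lt_of_le one_pos hp
  have he : (0:ℝ) < Real.exp 1 := Real.exp_pos 1
  have h1 : Real.exp 1 * (y / p) ≤ Real.exp (y / p) := by
    have h := Real.add_one_le_exp (y / p - 1)
    have h2 : Real.exp (y / p - 1) = Real.exp (y / p) / Real.exp 1 := Real.exp_sub _ _
    rw [h2] at h
    rw [mul_comm]
    calc y / p * Real.exp 1 = (y / p - 1 + 1) * Real.exp 1 := by ring
    _ ≤ (Real.exp (y/p) / Real.exp 1) * Real.exp 1 := by
        apply mul_le_mul_of_nonneg_right h he.le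
    _ = Real.exp (y/p) := by field_simp
  have h3 : (Real.exp 1 * (y / p)) ^ p ≤ (Real.exp (y / p)) ^ p :=
    Real.rpow_le_rpow (by positivity) h1 hp0.le
  have h4 : (Real.exp (y / p)) ^ p = Real.exp y := by
    rw [← Real.exp_mul, div_mul_cancel₀ _ hp0.ne']
  have h5 : y ^ p = (p / Real.exp 1) ^ p * (Real.exp 1 * (y / p)) ^ p := by
    rw [← Real.mul_rpow (by positivity) (by positivity)]
    congr 1
    field_simp
  calc y ^ p = (p / Real.exp 1) ^ p * (Real.exp 1 * (y / p)) ^ p := h5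
  _ ≤ (p / Real.exp 1) ^ p * (Real.exp (y / p)) ^ p :=
      mul_le_mul_of_nonneg_left h3 (by positivity)
  _ = (p / Real.exp 1) ^ p * Real.exp y := by rw [h4]

lemma abs_rpow_le {p t x : ℝ} (hp : 1 ≤ p) (ht : 0 < t) :
    |x| ^ p ≤ (p / (t * Real.exp 1)) ^ p * (Real.exp (t * x) + Real.exp (-(t * x))) := by
  have hp0 : 0 < p := lt_of_lt_of_le one_pos hp
  have h1 : (t * |x|) ^ p ≤ (p / Real.exp 1) ^ p * Real.exp (t * |x|) :=
    rpow_le_exp_aux hp (by positivity)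
  have h2 : Real.exp (t * |x|) ≤ Real.exp (t * x) + Real.exp (-(t * x)) := by
    rcases abs_cases x with ⟨h, _⟩ | ⟨h, _⟩
    · rw [h]; nlinarith [Real.exp_pos (-(t*x))]
    · rw [h, mul_neg]; nlinarith [Real.exp_pos (t*x)]
  have h3 : (t * |x|) ^ p = t ^ p * |x| ^ p := Real.mul_rpow ht.le (abs_nonneg x)
  have h4 : (p / (t * Real.exp 1)) ^ p = (p / Real.exp 1) ^ p / t ^ p := by
    rw [← Real.div_rpow (by positivity) ht.le]
    congr 1
    rw [div_div, mul_comm]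
  have htp : (0:ℝ) < t ^ p := Real.rpow_pos_of_pos ht p
  rw [h4, div_mul_eq_mul_div, le_div_iff₀ htp]
  calc |x| ^ p * t ^ p = (t * |x|) ^ p := by rw [h3]; ring
  _ ≤ (p / Real.exp 1) ^ p * Real.exp (t * |x|) := h1
  _ ≤ (p / Real.exp 1) ^ p * (Real.exp (t * x) + Real.exp (-(t * x))) := by
      apply mul_le_mul_of_nonneg_left h2 (by positivity)

lemma exp_taylor_bound {u : ℝ} (hu : |u| ≤ 1) : Real.exp u - 1 - u ≤ 3/4 * u ^ 2 := by
  have h := Real.exp_bound hu (n := 2) (by norm_num)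
  rw [Finset.sum_range_succ, Finset.sum_range_one] at h
  simp only [pow_zero, pow_one, Nat.factorial] at h
  norm_num at h
  have h2 := abs_le.1 h
  nlinarith [_root_.sq_abs u, h2.2]

theorem poisson_centered_moment_bound
    {Ω : Type*} [MeasurableSpace Ω] (μ : Measure Ω) [IsProbabilityMeasure μ]
    (lam : ℝ) (hlam : 0 ≤ lam) (Z : Ω → ℕ) (hZ : Measurable Z)
    (hpmf : ∀ k : ℕ, μ {ω | Z ω = k} =
      ENNReal.ofReal (Real.exp (-lam) * lam ^ k / (k.factorial : ℝ))) :
    (∀ p : ℝ, 1 ≤ p →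
      (∫ ω, |(Z ω : ℝ) - lam| ^ p ∂μ) ^ (1 / p) ≤ 5 * (Real.sqrt (3 * lam) + 2) * p) ∧
    ∃ C : ℝ, 0 < C ∧ ∀ p : ℝ, 1 ≤ p →
      (∫ ω, |(Z ω : ℝ) - lam| ^ p ∂μ) ^ (1 / p) ≤ C * (Real.sqrt (3 * lam) + 2) * p := by
  set s : ℝ := Real.sqrt (3 * lam) + 2 with hs_def
  have hsq : Real.sqrt (3 * lam) ^ 2 = 3 * lam := Real.sq_sqrt (by linarith)
  have hs2 : (2:ℝ) ≤ s := by
    have := Real.sqrt_nonneg (3 * lam); rw [hs_def]; linarith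
  have hs0 : (0:ℝ) < s := by linarith
  set t : ℝ := s⁻¹ with ht_def
  have ht0 : 0 < t := inv_pos.2 hs0
  have ht1 : t ≤ 1 := by
    rw [ht_def, inv_eq_one_div, div_le_one hs0]; linarith
  have hlt : lam * t ^ 2 ≤ 1/3 := by
    have h1 : 3 * lam ≤ s ^ 2 := by
      rw [hs_def]; nlinarith [Real.sqrt_nonneg (3 * lam)]
    have ht2 : t ^ 2 * s ^ 2 = 1 := by
      rw [ht_def]; field_simp
    have h2 := mul_le_mul_of_nonneg_right h1 (sq_nonneg t)
    nlinarith [h2, ht2]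
  have hmgfb : ∀ u : ℝ, u = t ∨ u = -t → lam * (Real.exp u - 1 - u) ≤ 1/4 := by
    intro u hu
    have hu2 : u ^ 2 = t ^ 2 := by rcases hu with h | h <;> subst h <;> ring
    have habs : |u| ≤ 1 := by
      rcases hu with h | h <;> rw [h]
      · rw [abs_of_pos ht0]; exact ht1
      · rw [abs_neg, abs_of_pos ht0]; exact ht1
    have hb := exp_taylor_bound habs
    calc lam * (Real.exp u - 1 - u) ≤ lam * (3/4 * u ^ 2) :=
          mul_le_mul_of_nonneg_left hb hlam
    _ = 3/4 * (lam * t ^ 2) := by rw [hu2]; ring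
    _ ≤ 3/4 * (1/3) := by linarith
    _ = 1/4 := by norm_num
  have key : ∀ p : ℝ, 1 ≤ p → (∫ ω, |(Z ω : ℝ) - lam| ^ p ∂μ) ^ (1 / p) ≤ s * p := by
    intro p hp
    have hp0 : 0 < p := lt_of_lt_of_le one_pos hp
    set c : ℝ := (s * p / Real.exp 1) ^ p with hc_def
    have hspe : 0 ≤ s * p / Real.exp 1 :=
      div_nonneg (mul_nonneg hs0.le hp0.le) (Real.exp_nonneg 1)
    have hc0 : 0 ≤ c := Real.rpow_nonneg hspe p
    have hm1 : Measurable fun ω => |(Z ω : ℝ) - lam| ^ p :=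
      Measurable.comp (f := Z) (g := fun k : ℕ => |(k : ℝ) - lam| ^ p)
        measurable_from_nat hZ
    have hA : ∀ g : ℕ → ENNReal, ∫⁻ ω, g (Z ω) ∂μ = ∑' k, μ {ω | Z ω = k} * g k := by
      intro g
      rw [← lintegral_map measurable_from_nat hZ, lintegral_countable']
      refine tsum_congr fun k => ?_
      rw [Measure.map_apply hZ (measurableSet_singleton k), mul_comm]
      rfl
    set L := ∫⁻ ω, ENNReal.ofReal (|(Z ω : ℝ) - lam| ^ p) ∂μ with hL
    have hL_eq : L = ∑' k : ℕ, μ {ω | Z ω = k} * ENNReal.ofReal (|(k : ℝ) - lam| ^ p) :=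
      hA fun k => ENNReal.ofReal (|(k : ℝ) - lam| ^ p)
    have hpt : ∀ k : ℕ, ENNReal.ofReal (|(k : ℝ) - lam| ^ p) ≤
        ENNReal.ofReal c * (ENNReal.ofReal (Real.exp (t * ((k : ℝ) - lam))) +
          ENNReal.ofReal (Real.exp (-(t * ((k : ℝ) - lam))))) := by
      intro k
      have h := abs_rpow_le (x := (k : ℝ) - lam) hp ht0
      have hc' : p / (t * Real.exp 1) = s * p / Real.exp 1 := by
        rw [ht_def]; field_simp
      rw [hc'] at h
      calc ENNReal.ofReal (|(k : ℝ) - lam| ^ p)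
          ≤ ENNReal.ofReal (c * (Real.exp (t * ((k : ℝ) - lam)) +
              Real.exp (-(t * ((k : ℝ) - lam))))) := ENNReal.ofReal_le_ofReal h
      _ = _ := by
          rw [ENNReal.ofReal_mul hc0,
            ENNReal.ofReal_add (Real.exp_nonneg _) (Real.exp_nonneg _)]
    have hsum : ∀ u : ℝ, u = t ∨ u = -t →
        ∑' k : ℕ, μ {ω | Z ω = k} * ENNReal.ofReal (Real.exp (u * ((k : ℝ) - lam))) ≤
          ENNReal.ofReal (Real.exp (1/4)) := by
      intro u hu
      have hS := pois_hasSum lam u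
      have hnn : ∀ k : ℕ, 0 ≤ Real.exp (-lam) * lam ^ k / (k.factorial : ℝ) *
          Real.exp (u * ((k : ℝ) - lam)) := fun k =>
        mul_nonneg (div_nonneg (mul_nonneg (Real.exp_nonneg _) (pow_nonneg hlam _))
          (Nat.cast_nonneg _)) (Real.exp_nonneg _)
      have heq : ∑' k : ℕ, μ {ω | Z ω = k} * ENNReal.ofReal (Real.exp (u * ((k : ℝ) - lam))) =
          ENNReal.ofReal (Real.exp (lam * (Real.exp u - 1 - u))) := by
        calc ∑' k : ℕ, μ {ω | Z ω = k} * ENNReal.ofReal (Real.exp (u * ((k : ℝ) - lam)))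
            = ∑' k : ℕ, ENNReal.ofReal (Real.exp (-lam) * lam ^ k / (k.factorial : ℝ) *
                Real.exp (u * ((k : ℝ) - lam))) := by
              refine tsum_congr fun k => ?_
              rw [hpmf k, ← ENNReal.ofReal_mul (div_nonneg (mul_nonneg (Real.exp_nonneg _)
                (pow_nonneg hlam _)) (Nat.cast_nonneg _))]
        _ = ENNReal.ofReal (∑' k : ℕ, Real.exp (-lam) * lam ^ k / (k.factorial : ℝ) *
              Real.exp (u * ((k : ℝ) - lam))) :=
            (ENNReal.ofReal_tsum_of_nonneg hnn hS.summable).symm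
        _ = _ := by rw [hS.tsum_eq]
      rw [heq]
      exact ENNReal.ofReal_le_ofReal (Real.exp_le_exp.2 (hmgfb u hu))
    have h2e : Real.exp (1/4) + Real.exp (1/4) ≤ Real.exp 1 := by
      have hmul : Real.exp (1/4 : ℝ) * Real.exp (-(1/4 : ℝ)) = 1 := by
        rw [← Real.exp_add]; norm_num
      nlinarith [Real.exp_one_gt_d9, Real.add_one_le_exp (-(1/4 : ℝ)),
        Real.exp_pos (1/4 : ℝ), Real.exp_pos (-(1/4 : ℝ))]
    have hLle : L ≤ ENNReal.ofReal (c * Real.exp 1) := by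
      rw [hL_eq]
      calc ∑' k : ℕ, μ {ω | Z ω = k} * ENNReal.ofReal (|(k : ℝ) - lam| ^ p)
          ≤ ∑' k : ℕ, μ {ω | Z ω = k} * (ENNReal.ofReal c *
              (ENNReal.ofReal (Real.exp (t * ((k : ℝ) - lam))) +
               ENNReal.ofReal (Real.exp (-(t * ((k : ℝ) - lam)))))) :=
            ENNReal.tsum_le_tsum fun k => mul_le_mul_right (hpt k) _
      _ = ENNReal.ofReal c *
            ((∑' k : ℕ, μ {ω | Z ω = k} * ENNReal.ofReal (Real.exp (t * ((k : ℝ) - lam)))) +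
             ∑' k : ℕ, μ {ω | Z ω = k} * ENNReal.ofReal (Real.exp (-(t * ((k : ℝ) - lam))))) := by
          rw [← ENNReal.tsum_add, ← ENNReal.tsum_mul_left]
          refine tsum_congr fun k => ?_
          ring
      _ ≤ ENNReal.ofReal c * (ENNReal.ofReal (Real.exp (1/4)) + ENNReal.ofReal (Real.exp (1/4))) := by
          gcongr
          · exact hsum t (Or.inl rfl)
          · have h := hsum (-t) (Or.inr rfl)
            simpa [neg_mul] using h
      _ ≤ ENNReal.ofReal (c * Real.exp 1) := by
          rw [← ENNReal.ofReal_add (Real.exp_nonneg _) (Real.exp_nonneg _),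
            ENNReal.ofReal_mul hc0]
          exact mul_le_mul_right (ENNReal.ofReal_le_ofReal h2e) _
    have hint_eq : (∫ ω, |(Z ω : ℝ) - lam| ^ p ∂μ) = L.toReal := by
      rw [hL, integral_eq_lintegral_of_nonneg_ae
        (Filter.Eventually.of_forall fun ω => by positivity) hm1.aestronglyMeasurable]
    have hIle : (∫ ω, |(Z ω : ℝ) - lam| ^ p ∂μ) ≤ c * Real.exp 1 := by
      rw [hint_eq]
      exact ENNReal.toReal_le_of_le_ofReal (mul_nonneg hc0 (Real.exp_nonneg 1)) hLle
    have hInn : 0 ≤ ∫ ω, |(Z ω : ℝ) - lam| ^ p ∂μ :=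
      integral_nonneg fun ω => by positivity
    have h1p : (1 : ℝ) / p ≤ 1 := (div_le_one hp0).2 hp
    calc (∫ ω, |(Z ω : ℝ) - lam| ^ p ∂μ) ^ (1 / p)
        ≤ (c * Real.exp 1) ^ (1 / p) := Real.rpow_le_rpow hInn hIle (by positivity)
    _ = (s * p / Real.exp 1) * Real.exp 1 ^ (1 / p) := by
        rw [hc_def, Real.mul_rpow hc0 (Real.exp_nonneg 1), ← Real.rpow_mul hspe,
          mul_one_div_cancel hp0.ne', Real.rpow_one]
    _ ≤ (s * p / Real.exp 1) * Real.exp 1 := by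
        apply mul_le_mul_of_nonneg_left _ hspe
        rw [Real.exp_one_rpow]
        exact Real.exp_le_exp.2 h1p
    _ = s * p := by field_simp
  have hsp : ∀ p : ℝ, 1 ≤ p → s * p ≤ 5 * s * p := by
    intro p hp
    nlinarith [mul_nonneg hs0.le (le_trans zero_le_one hp)]
  refine ⟨fun p hp => le_trans (key p hp) (hsp p hp),
    5, by norm_num, fun p hp => le_trans (key p hp) (hsp p hp)⟩
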